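/- Let Λ be a constant diagonal invertible 3×3 real matrix, D a real constant, and h ≠ 0 a real constant. Suppose ω, γ : ℝ → ℝ³ are differentiable, K(t) := Λω(t) − D·⟨ω(t), γ(t)⟩·γ(t), and for all t: K′(t) = K(t) × ω(t), γ′(t) = γ(t) × ω(t), ⟨γ(t), γ(t)⟩ = 1, and K(t) = h·γ(t). Then: (i) the function t ↦ ⟨ω(t), γ(t)⟩ is constant; (ii) for all t, Λω(t) = (h + D·⟨ω(t), γ(t)⟩)·γ(t); and (iii) ω satisfies the Euler top equation Λω′(t) = (Λω(t)) × ω(t) for all t. -/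

import Mathlib

open Matrix

private lemma hasDerivAt_dot3 {u v : ℝ → Fin 3 → ℝ} {u' v' : Fin 3 → ℝ} {t : ℝ}
    (hu : HasDerivAt u u' t) (hv : HasDerivAt v v' t) :
    HasDerivAt (fun s => u s ⬝ᵥ v s) (u' ⬝ᵥ v t + u t ⬝ᵥ v') t := by
  have h : ∀ i : Fin 3, HasDerivAt (fun s => u s i * v s i)
      (u' i * v t i + u t i * v' i) t :=
    fun i => (hasDerivAt_pi.1 hu i).mul (hasDerivAt_pi.1 hv i)
  have hs := HasDerivAt.fun_sum (fun i (_ : i ∈ Finset.univ) => h i)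
  have he1 : (fun s : ℝ => ∑ i : Fin 3, u s i * v s i) = fun s => u s ⬝ᵥ v s := rfl
  have he2 : (∑ i : Fin 3, (u' i * v t i + u t i * v' i)) = u' ⬝ᵥ v t + u t ⬝ᵥ v' := by
    rw [Finset.sum_add_distrib]; rfl
  rwa [he1, he2] at hs

private lemma hasDerivAt_mulVec3 (A : Matrix (Fin 3) (Fin 3) ℝ)
    {u : ℝ → Fin 3 → ℝ} {u' : Fin 3 → ℝ} {t : ℝ} (hu : HasDerivAt u u' t) :
    HasDerivAt (fun s => A *ᵥ u s) (A *ᵥ u') t := by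
  rw [hasDerivAt_pi]
  intro i
  simp only [Matrix.mulVec, dotProduct]
  exact HasDerivAt.fun_sum fun j _ => (hasDerivAt_pi.1 hu j).const_mul (A i j)

private lemma dot_cross_right (a b : Fin 3 → ℝ) : b ⬝ᵥ (crossProduct a b) = 0 := by
  simp [crossProduct, dotProduct, Fin.sum_univ_three]
  ring

private lemma cross_right_dot (a b : Fin 3 → ℝ) : (crossProduct a b) ⬝ᵥ b = 0 := by
  simp [crossProduct, dotProduct, Fin.sum_univ_three]
  ring

private lemma smul_cross (c : ℝ) (a b : Fin 3 → ℝ) :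
    crossProduct (c • a) b = c • crossProduct a b := by
  simp only [LinearMap.map_smul, LinearMap.smul_apply]

/-- The special case of the classical Chaplygin sphere with vertical momentum
`K = hγ`: then `⟨ω,γ⟩` is constant, `Λω = (h + D⟨ω,γ⟩)γ`, and `ω` satisfies the
Euler top equation `Λω̇ = (Λω) × ω`. -/
theorem chaplygin_sphere_vertical_momentum
    (Λ : Matrix (Fin 3) (Fin 3) ℝ) (hΛ : Λ.IsDiag) (hdet : IsUnit Λ.det)
    (D h : ℝ) (hh : h ≠ 0)
    (ω γ : ℝ → Fin 3 → ℝ)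
    (hωd : Differentiable ℝ ω) (hγd : Differentiable ℝ γ)
    (K : ℝ → Fin 3 → ℝ)
    (hKdef : ∀ t, K t = Λ *ᵥ ω t - (D * (ω t ⬝ᵥ γ t)) • γ t)
    (hK : ∀ t, HasDerivAt K (crossProduct (K t) (ω t)) t)
    (hγ : ∀ t, HasDerivAt γ (crossProduct (γ t) (ω t)) t)
    (hunit : ∀ t, γ t ⬝ᵥ γ t = 1)
    (hvert : ∀ t, K t = h • γ t) :
    (∀ t₁ t₂ : ℝ, ω t₁ ⬝ᵥ γ t₁ = ω t₂ ⬝ᵥ γ t₂) ∧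
    (∀ t, Λ *ᵥ ω t = (h + D * (ω t ⬝ᵥ γ t)) • γ t) ∧
    (∀ t, HasDerivAt (fun s => Λ *ᵥ ω s) (crossProduct (Λ *ᵥ ω t) (ω t)) t) := by
  have hΛsymm : Λᵀ = Λ := hΛ.isSymm
  have hω' : ∀ t, HasDerivAt ω (deriv ω t) t := fun t => (hωd t).hasDerivAt
  -- part (ii)
  have part2 : ∀ t, Λ *ᵥ ω t = (h + D * (ω t ⬝ᵥ γ t)) • γ t := by
    intro t
    have h1 : Λ *ᵥ ω t - (D * (ω t ⬝ᵥ γ t)) • γ t = h • γ t := by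
      rw [← hKdef t, hvert t]
    have h2 : Λ *ᵥ ω t = h • γ t + (D * (ω t ⬝ᵥ γ t)) • γ t := by
      rw [← h1]; abel
    rw [h2, ← add_smul]
  -- derivative of f := ⟨ω, γ⟩
  have hφ : ∀ t, HasDerivAt (fun s => ω s ⬝ᵥ γ s) (deriv ω t ⬝ᵥ γ t) t := by
    intro t
    have h0 : ω t ⬝ᵥ crossProduct (γ t) (ω t) = 0 := dot_cross_right (γ t) (ω t)
    have := hasDerivAt_dot3 (hω' t) (hγ t)
    rwa [h0, add_zero] at this
  -- derivative of Λω from the K-equation: Λω = K + (D f) γ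
  have hΛω' : ∀ t, HasDerivAt (fun s => Λ *ᵥ ω s)
      (crossProduct (K t) (ω t) + (D * (deriv ω t ⬝ᵥ γ t)) • γ t
        + (D * (ω t ⬝ᵥ γ t)) • crossProduct (γ t) (ω t)) t := by
    intro t
    have heq : (fun s => Λ *ᵥ ω s) = fun s => K s + (D * (ω s ⬝ᵥ γ s)) • γ s := by
      funext s
      rw [hKdef s]; abel
    rw [heq]
    have hd := (hK t).fun_add (((hφ t).const_mul D).fun_smul (hγ t))
    refine hd.congr_deriv ?_
    abel
  -- also HasDerivAt (Λω) (Λ ω' t)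
  have hΛω'2 : ∀ t, HasDerivAt (fun s => Λ *ᵥ ω s) (Λ *ᵥ deriv ω t) t :=
    fun t => hasDerivAt_mulVec3 Λ (hω' t)
  have hkey : ∀ t, Λ *ᵥ deriv ω t
      = crossProduct (K t) (ω t) + (D * (deriv ω t ⬝ᵥ γ t)) • γ t
        + (D * (ω t ⬝ᵥ γ t)) • crossProduct (γ t) (ω t) :=
    fun t => (hΛω'2 t).unique (hΛω' t)
  -- energy E = ⟨Λω, ω⟩ ; compute its derivative two ways
  have hE1 : ∀ t, HasDerivAt (fun s => (Λ *ᵥ ω s) ⬝ᵥ ω s)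
      ((Λ *ᵥ deriv ω t) ⬝ᵥ ω t + (Λ *ᵥ ω t) ⬝ᵥ deriv ω t) t :=
    fun t => hasDerivAt_dot3 (hΛω'2 t) (hω' t)
  have hsym : ∀ t, (Λ *ᵥ ω t) ⬝ᵥ deriv ω t = (Λ *ᵥ deriv ω t) ⬝ᵥ ω t := by
    intro t
    rw [dotProduct_comm, Matrix.dotProduct_mulVec, ← Matrix.mulVec_transpose, hΛsymm,
      dotProduct_comm]
  have hE1' : ∀ t, HasDerivAt (fun s => (Λ *ᵥ ω s) ⬝ᵥ ω s)
      (2 * (D * (deriv ω t ⬝ᵥ γ t) * (ω t ⬝ᵥ γ t))) t := by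
    intro t
    have hd := hE1 t
    rw [hsym t, hkey t] at hd
    have c1 : crossProduct (γ t) (ω t) ⬝ᵥ ω t = 0 := cross_right_dot _ _
    have hval : (crossProduct (K t) (ω t) + (D * (deriv ω t ⬝ᵥ γ t)) • γ t
        + (D * (ω t ⬝ᵥ γ t)) • crossProduct (γ t) (ω t)) ⬝ᵥ ω t
        + (crossProduct (K t) (ω t) + (D * (deriv ω t ⬝ᵥ γ t)) • γ t
        + (D * (ω t ⬝ᵥ γ t)) • crossProduct (γ t) (ω t)) ⬝ᵥ ω t
        = 2 * (D * (deriv ω t ⬝ᵥ γ t) * (ω t ⬝ᵥ γ t)) := by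
      rw [hvert t, smul_cross, add_dotProduct, add_dotProduct, smul_dotProduct,
        smul_dotProduct, smul_dotProduct, c1, dotProduct_comm (γ t) (ω t)]
      simp only [smul_eq_mul, mul_zero]
      ring
    rwa [hval] at hd
  -- other expression: E = (h + D f) f
  have hEeq : (fun s => (Λ *ᵥ ω s) ⬝ᵥ ω s)
      = fun s => (h + D * (ω s ⬝ᵥ γ s)) * (ω s ⬝ᵥ γ s) := by
    funext s
    rw [part2 s, smul_dotProduct, dotProduct_comm, smul_eq_mul]
  have hE2 : ∀ t, HasDerivAt (fun s => (Λ *ᵥ ω s) ⬝ᵥ ω s)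
      ((D * (deriv ω t ⬝ᵥ γ t)) * (ω t ⬝ᵥ γ t)
        + (h + D * (ω t ⬝ᵥ γ t)) * (deriv ω t ⬝ᵥ γ t)) t := by
    intro t
    rw [hEeq]
    exact (((hφ t).const_mul D).const_add h).mul (hφ t)
  have hφ0 : ∀ t, deriv ω t ⬝ᵥ γ t = 0 := by
    intro t
    have hu := (hE1' t).unique (hE2 t)
    have hz : h * (deriv ω t ⬝ᵥ γ t) = 0 := by nlinarith [hu]
    exact (mul_eq_zero.1 hz).resolve_left hh
  -- f constant
  have hdf : ∀ t, HasDerivAt (fun s => ω s ⬝ᵥ γ s) 0 t := by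
    intro t
    have := hφ t
    rwa [hφ0 t] at this
  have hfconst : ∀ t₁ t₂ : ℝ, ω t₁ ⬝ᵥ γ t₁ = ω t₂ ⬝ᵥ γ t₂ :=
    fun t₁ t₂ => is_const_of_deriv_eq_zero
      (fun t => (hdf t).differentiableAt) (fun t => (hdf t).deriv) t₁ t₂
  refine ⟨hfconst, part2, ?_⟩
  -- part (iii)
  intro t
  have hd := hΛω' t
  have hval : crossProduct (K t) (ω t) + (D * (deriv ω t ⬝ᵥ γ t)) • γ t
      + (D * (ω t ⬝ᵥ γ t)) • crossProduct (γ t) (ω t)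
      = crossProduct (Λ *ᵥ ω t) (ω t) := by
    rw [hvert t, hφ0 t, part2 t, smul_cross, smul_cross]
    simp only [mul_zero, zero_smul, add_zero, add_smul]
  rwa [hval] at hd
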